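/- Let G be a locally compact Hausdorff topological group with a contractive automorphism φ. Then there exists a compact neighborhood U of the identity with φ(U) ⊆ U and ⋂ₙ φⁿ(U) = {1}, and the family (φⁿ(U))ₙ is a neighborhood base at the identity. -/

import Mathlib

open Filter Set Function Topology

set_option linter.unusedSectionVars false
section Aux
variable {G : Type*} [TopologicalSpace G] [Group G] [IsTopologicalGroup G]
    [LocallyCompactSpace G] [T2Space G]

theorem caux_iter_one (φ : G ≃* G) : ∀ n, (⇑φ)^[n] (1:G) = 1
  | 0 => rfl
  | (n+1) => by rw [Function.iterate_succ_apply', caux_iter_one φ n, map_one]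

theorem caux_iter_mul (φ : G ≃* G) (n : ℕ) (a b : G) :
    (⇑φ)^[n] (a*b) = (⇑φ)^[n] a * (⇑φ)^[n] b := by
  induction n with
  | zero => rfl
  | succ n ih => rw [iterate_succ_apply', iterate_succ_apply', iterate_succ_apply', ih, map_mul]

theorem caux_iter_inv (φ : G ≃* G) (n : ℕ) (a : G) :
    (⇑φ)^[n] a⁻¹ = ((⇑φ)^[n] a)⁻¹ := by
  induction n with
  | zero => rfl
  | succ n ih => rw [iterate_succ_apply', iterate_succ_apply', ih, map_inv]

/-- Key Baire-category lemma: for every neighborhood `W` of `1` there is a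
neighborhood `Q` of `1` whose entire forward orbit lies in `W`. -/
theorem caux_lemA (φ : G ≃* G) (hcont : Continuous φ)
    (hcontr : ∀ x : G, Tendsto (fun n => (⇑φ)^[n] x) atTop (𝓝 (1:G)))
    {W : Set G} (hW : W ∈ 𝓝 (1:G)) :
    ∃ Q ∈ 𝓝 (1:G), ∀ m : ℕ, ∀ x ∈ Q, (⇑φ)^[m] x ∈ W := by
  obtain ⟨S, hS, hSdiv⟩ := exists_nhds_split_inv hW
  obtain ⟨V, hVmem, hVS, hVcomp⟩ := local_compact_nhds hS
  have hcontIter : ∀ m : ℕ, Continuous ((⇑φ)^[m]) := fun m => hcont.iterate m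
  set F : ℕ → Set G := fun n => ⋂ m : ℕ, (⇑φ)^[n+m] ⁻¹' V with hF
  have hFclosed : ∀ n, IsClosed (F n) := fun n =>
    isClosed_iInter (fun m => hVcomp.isClosed.preimage (hcontIter _))
  have hFcover : (⋃ n, F n) = univ := by
    ext x
    simp only [mem_iUnion, mem_univ, iff_true]
    obtain ⟨n, hn⟩ := eventually_atTop.1 ((hcontr x).eventually_mem hVmem)
    exact ⟨n, mem_iInter.2 fun m => hn _ (Nat.le_add_right n m)⟩
  obtain ⟨N, hN⟩ := nonempty_interior_of_iUnion_of_closed hFclosed hFcover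
  obtain ⟨x₀, hx₀⟩ := hN
  have hx₀F : x₀ ∈ F N := interior_subset hx₀
  -- Q₁ handles m ≥ N
  set Q₁ : Set G := (fun q => q * x₀) ⁻¹' interior (F N) with hQ₁def
  have hQ₁open : IsOpen Q₁ := isOpen_interior.preimage (continuous_mul_right x₀)
  have hQ₁mem : (1:G) ∈ Q₁ := by simpa [Q₁] using hx₀
  -- Q₂ handles m < N
  set Q₂ : Set G := ⋂ m ∈ Finset.range N, (⇑φ)^[m] ⁻¹' W with hQ₂def
  have hQ₂mem : Q₂ ∈ 𝓝 (1:G) := by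
    refine (Filter.biInter_finset_mem _).2 fun m _ => ?_
    exact (hcontIter m).continuousAt.preimage_mem_nhds (by rw [caux_iter_one]; exact hW)
  refine ⟨Q₁ ∩ Q₂, Filter.inter_mem (hQ₁open.mem_nhds hQ₁mem) hQ₂mem, ?_⟩
  rintro m x ⟨hx1, hx2⟩
  rcases lt_or_ge m N with hm | hm
  · exact mem_iInter₂.1 hx2 m (Finset.mem_range.2 hm)
  · have h1 : x * x₀ ∈ F N := interior_subset hx1
    obtain ⟨k, rfl⟩ := Nat.exists_eq_add_of_le hm
    have hA : (⇑φ)^[N + k] (x * x₀) ∈ V := mem_iInter.1 h1 k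
    have hB : (⇑φ)^[N + k] x₀ ∈ V := mem_iInter.1 hx₀F k
    have : (⇑φ)^[N + k] x = (⇑φ)^[N + k] (x * x₀) / (⇑φ)^[N + k] x₀ := by
      rw [div_eq_mul_inv, ← caux_iter_inv, ← caux_iter_mul, mul_inv_cancel_right]
    rw [this]
    exact hSdiv _ (hVS hA) _ (hVS hB)

/-- Uniform convergence on compact sets. -/
theorem caux_lemB (φ : G ≃* G) (hcont : Continuous φ)
    (hcontr : ∀ x : G, Tendsto (fun n => (⇑φ)^[n] x) atTop (𝓝 (1:G)))
    {K W : Set G} (hK : IsCompact K) (hW : W ∈ 𝓝 (1:G)) :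
    ∃ N : ℕ, ∀ n ≥ N, ∀ x ∈ K, (⇑φ)^[n] x ∈ W := by
  obtain ⟨S, hSopen, hSone, hSS⟩ := exists_open_nhds_one_mul_subset hW
  have hSnhds : S ∈ 𝓝 (1:G) := hSopen.mem_nhds hSone
  obtain ⟨Q, hQ, hQorb⟩ := caux_lemA φ hcont hcontr hSnhds
  have hcover : ∀ x ∈ K, {y | x⁻¹ * y ∈ Q} ∈ 𝓝 x := by
    intro x _
    have : ContinuousAt (fun y => x⁻¹ * y) x := (continuous_mul_left x⁻¹).continuousAt
    exact this.preimage_mem_nhds (by simpa using hQ)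
  obtain ⟨t, htK, ht⟩ := hK.elim_nhds_subcover _ hcover
  have hev : ∀ᶠ n in atTop, ∀ x ∈ t, (⇑φ)^[n] x ∈ S :=
    eventually_all_finset t |>.2 fun x _ => (hcontr x).eventually_mem hSnhds
  obtain ⟨N, hN⟩ := eventually_atTop.1 hev
  refine ⟨N, fun n hn y hy => ?_⟩
  obtain ⟨x, hxt, hxy⟩ := mem_iUnion₂.1 (ht hy)
  have h1 : (⇑φ)^[n] x ∈ S := hN n hn x hxt
  have h2 : (⇑φ)^[n] (x⁻¹ * y) ∈ S := hQorb n _ hxy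
  have : (⇑φ)^[n] y = (⇑φ)^[n] x * (⇑φ)^[n] (x⁻¹ * y) := by
    rw [← caux_iter_mul, mul_inv_cancel_left]
  rw [this]
  exact hSS (mul_mem_mul h1 h2)

end Aux

/-- If G is a locally compact Hausdorff topological group with a contractive
automorphism φ, then there is a compact neighborhood U of 1 with φ(U) ⊆ U,
⋂ₙ φⁿ(U) = {1}, and (φⁿ(U))ₙ a neighborhood base at 1. -/
theorem contractive_automorphism_compact_nbhd_base
    {G : Type*} [TopologicalSpace G] [Group G] [IsTopologicalGroup G]
    [LocallyCompactSpace G] [T2Space G]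
    (φ : G ≃* G) (hcont : Continuous φ) (hcont' : Continuous φ.symm)
    (hcontr : ∀ x : G, Filter.Tendsto (fun n => (⇑φ)^[n] x) Filter.atTop (nhds (1 : G))) :
    ∃ U : Set G, IsCompact U ∧ U ∈ nhds (1 : G) ∧ ⇑φ '' U ⊆ U ∧
      (⋂ n : ℕ, (⇑φ)^[n] '' U) = {(1 : G)} ∧
      (nhds (1 : G)).HasBasis (fun _ : ℕ => True) (fun n => (⇑φ)^[n] '' U) := by
  obtain ⟨V, hVcomp, hVnhds⟩ := exists_compact_mem_nhds (1:G)
  obtain ⟨Q, hQ, hQorb⟩ := caux_lemA φ hcont hcontr hVnhds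
  set U : Set G := ⋂ m : ℕ, (⇑φ)^[m] ⁻¹' V with hUdef
  have hcontIter : ∀ m : ℕ, Continuous ((⇑φ)^[m]) := fun m => hcont.iterate m
  have hUclosed : IsClosed U :=
    isClosed_iInter fun m => hVcomp.isClosed.preimage (hcontIter m)
  have hUsubV : U ⊆ V := fun x hx => by simpa using mem_iInter.1 hx 0
  have hUcomp : IsCompact U := hVcomp.of_isClosed_subset hUclosed hUsubV
  have hUnhds : U ∈ nhds (1:G) :=
    Filter.mem_of_superset hQ (fun x hx => mem_iInter.2 fun m => hQorb m x hx)
  have himg : ⇑φ '' U ⊆ U := by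
    rintro _ ⟨x, hx, rfl⟩
    refine mem_iInter.2 fun m => ?_
    have : (⇑φ)^[m] (φ x) ∈ V := by
      rw [show (⇑φ)^[m] (φ x) = (⇑φ)^[m+1] x from (Function.iterate_succ_apply _ m x).symm]
      exact mem_iInter.1 hx (m+1)
    exact this
  -- each iterated image is a neighborhood of 1
  have hhomeo : IsOpenMap (⇑φ) := by
    exact (Homeomorph.mk φ.toEquiv hcont hcont').isOpenMap
  have hUn : ∀ n : ℕ, (⇑φ)^[n] '' U ∈ nhds (1:G) := by
    intro n
    induction n with
    | zero => simpa using hUnhds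
    | succ n ih =>
        rw [Function.iterate_succ', Set.image_comp]
        have := hhomeo.image_mem_nhds ih
        rwa [map_one] at this
  -- shrinking property
  have hshrink : ∀ W ∈ nhds (1:G), ∃ n : ℕ, (⇑φ)^[n] '' U ⊆ W := by
    intro W hW
    obtain ⟨N, hN⟩ := caux_lemB φ hcont hcontr hUcomp hW
    exact ⟨N, by rintro _ ⟨x, hx, rfl⟩; exact hN N le_rfl x hx⟩
  refine ⟨U, hUcomp, hUnhds, himg, ?_, ?_⟩
  · ext x
    simp only [Set.mem_iInter, Set.mem_singleton_iff]
    constructor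
    · intro hx
      by_contra hne
      obtain ⟨n, hn⟩ := hshrink {x}ᶜ (compl_singleton_mem_nhds (Ne.symm hne))
      exact hn (hx n) rfl
    · rintro rfl n
      exact ⟨1, mem_of_mem_nhds hUnhds, caux_iter_one φ n⟩
  · constructor
    intro t
    constructor
    · intro ht
      obtain ⟨n, hn⟩ := hshrink t ht
      exact ⟨n, trivial, hn⟩
    · rintro ⟨n, -, hn⟩
      exact Filter.mem_of_superset (hUn n) hn
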